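/- (Asymmetry of closeness, the 'antisymmetry' claim of Theorem 5.2.) Let ρ be an ordinal and x, u, v : ℕ → X sequences. It cannot happen simultaneously that for every m ∈ ℕ, {n : d (u n) (x n) ♯ ω^ρ · m ≤ d (v n) (x n)} ∈ F and for every m ∈ ℕ, {n : d (v n) (x n) ♯ ω^ρ · m ≤ d (u n) (x n)} ∈ F. -/

import Mathlib

open Filter Ordinal
open scoped Ordinal

universe u

/-- Natural (Hessenberg) sum of ordinals, as `Ordinal.nadd` was defined in the older Mathlib
(removed from the current Mathlib). -/
noncomputable def Ordinal.nadd (a b : Ordinal.{u}) : Ordinal.{u} :=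
  max (⨆ x : Set.Iio a, Order.succ (Ordinal.nadd x.1 b))
    (⨆ x : Set.Iio b, Order.succ (Ordinal.nadd a x.1))
termination_by (a, b)
decreasing_by all_goals cases x; decreasing_tactic

infixl:65 " ♯ " => Ordinal.nadd

/-- Sequences `x, y : ℕ → X` are `ρ`-limitedly distant if there exists `μ ∈ ℕ` with
`{n : d (x n) (y n) ≤ ω^ρ · μ} ∈ F`. -/
def LimitedlyDistant {X : Type*} (d : X → X → Ordinal) (F : Ultrafilter ℕ)
    (ρ : Ordinal) (x y : ℕ → X) : Prop :=
  ∃ μ : ℕ, {n : ℕ | d (x n) (y n) ≤ ω ^ ρ * μ} ∈ F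

lemma succ_nadd_le_left_aux {a b x : Ordinal.{u}} (h : x < a) :
    Order.succ (x ♯ b) ≤ a ♯ b := by
  rw [Ordinal.nadd.eq_1 a b]
  exact le_max_of_le_left (le_ciSup (f := fun y : Set.Iio a => Order.succ (y.1 ♯ b))
    Ordinal.bddAbove_of_small ⟨x, h⟩)

lemma succ_nadd_le_right_aux {a b x : Ordinal.{u}} (h : x < b) :
    Order.succ (a ♯ x) ≤ a ♯ b := by
  rw [Ordinal.nadd.eq_1 a b]
  exact le_max_of_le_right (le_ciSup (f := fun y : Set.Iio b => Order.succ (a ♯ y.1))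
    Ordinal.bddAbove_of_small ⟨x, h⟩)

lemma le_nadd_self_aux (a b : Ordinal.{u}) : a ≤ a ♯ b := by
  induction a using Ordinal.induction with
  | h a ih =>
    apply le_of_forall_lt
    intro x hx
    exact (ih x hx).trans_lt ((Order.lt_succ _).trans_le (succ_nadd_le_left_aux hx))

lemma lt_nadd_of_pos_aux (a : Ordinal.{u}) {c : Ordinal.{u}} (hc : 0 < c) : a < a ♯ c :=
  (le_nadd_self_aux a 0).trans_lt ((Order.lt_succ _).trans_le (succ_nadd_le_right_aux hc))

theorem closeness_asymm
    (X : Type*) (d : X → X → Ordinal)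
    (hd0 : ∀ a b : X, d a b = 0 ↔ a = b)
    (hdsymm : ∀ a b : X, d a b = d b a)
    (hdtri : ∀ a b c : X, d a c ≤ d a b ♯ d b c)
    (F : Ultrafilter ℕ) (hF : ∀ s : Set ℕ, sᶜ.Finite → s ∈ F)
    (ρ : Ordinal) (x u v : ℕ → X) :
    ¬ ((∀ m : ℕ, {n : ℕ | d (u n) (x n) ♯ ω ^ ρ * m ≤ d (v n) (x n)} ∈ F) ∧
       (∀ m : ℕ, {n : ℕ | d (v n) (x n) ♯ ω ^ ρ * m ≤ d (u n) (x n)} ∈ F)) := by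
  rintro ⟨h1, h2⟩
  obtain ⟨n, hn1, hn2⟩ := (Ultrafilter.nonempty_of_mem (inter_mem (h1 1) (h2 1)))
  simp only [Set.mem_setOf_eq, Nat.cast_one, mul_one] at hn1 hn2
  have hpos : (0 : Ordinal) < ω ^ ρ := opow_pos _ omega0_pos
  have : d (u n) (x n) < d (u n) (x n) := by
    calc d (u n) (x n) < d (u n) (x n) ♯ ω ^ ρ := by
          exact lt_nadd_of_pos_aux _ hpos
      _ ≤ d (v n) (x n) := hn1
      _ < d (v n) (x n) ♯ ω ^ ρ := by
          exact lt_nadd_of_pos_aux _ hpos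
      _ ≤ d (u n) (x n) := hn2
  exact absurd this (lt_irrefl _)
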